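/- Let f : ℝⁿ × ℝᵐ → ℝ and g_i : ℝⁿ × ℝᵐ → ℝ (i = 1,…,q) be convex in the joint variable (x,y) and differentiable. Let x̄ ∈ ℝⁿ, ȳ ∈ ℝᵐ and u ∈ ℝ^q satisfy: g_i(x̄,ȳ) ≤ 0 and u_i ≥ 0 for all i, Σ_i u_i g_i(x̄,ȳ) = 0, and ∇_y f(x̄,ȳ) + Σ_i u_i ∇_y g_i(x̄,ȳ) = 0. Then for every x ∈ ℝⁿ and every y ∈ ℝᵐ with g_i(x,y) ≤ 0 for all i, f(x,y) ≥ f(x̄,ȳ) + ⟨∇_x f(x̄,ȳ) + Σ_i u_i ∇_x g_i(x̄,ȳ), x − x̄⟩. In particular, ∇_x ℓ(x̄,ȳ,u), with ℓ(x,y,u) := f(x,y) + uᵀg(x,y), is a subgradient (in the sense of convex analysis) of the lower-level optimal value function φ(x) := inf{f(x,y) : g(x,y) ≤ 0} at x̄. -/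

import Mathlib

open scoped RealInnerProductSpace

/-- Gradient inequality for a convex differentiable function on a normed space. -/
lemma convex_fderiv_le {E : Type*} [NormedAddCommGroup E] [NormedSpace ℝ E]
    {F : E → ℝ} (hc : ConvexOn ℝ Set.univ F) (hd : Differentiable ℝ F) (a b : E) :
    F a + fderiv ℝ F a (b - a) ≤ F b := by
  set h : ℝ → ℝ := fun t => F (a + t • (b - a)) with hh
  have hconv : ConvexOn ℝ Set.univ h := by
    have := hc.comp_affineMap (AffineMap.lineMap a b)
    simp only [AffineMap.lineMap_apply_module, Set.preimage_univ] at this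
    convert this using 1
    any_goals rfl
    funext t
    simp only [hh, Function.comp, AffineMap.lineMap_apply_module]
    congr 1
    module
  have hcurve : HasDerivAt (fun t : ℝ => a + t • (b - a)) (b - a) 0 := by
    simpa using ((hasDerivAt_id (0:ℝ)).smul_const (b - a)).const_add a
  have hderiv : HasDerivAt h (fderiv ℝ F a (b - a)) 0 := by
    have h0 : a + (0:ℝ) • (b - a) = a := by simp
    have := ((hd a).hasFDerivAt.comp_hasDerivAt_of_eq 0 hcurve h0.symm)
    simpa [hh, Function.comp_def] using this
  have := hconv.le_slope_of_hasDerivAt (Set.mem_univ 0) (Set.mem_univ 1) one_pos hderiv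
  rw [slope_def_field] at this
  simp only [hh] at this
  have h0 : a + (0:ℝ) • (b - a) = a := by simp
  have h1 : a + (1:ℝ) • (b - a) = b := by simp
  rw [h0, h1] at this
  rw [map_sub]
  simp at this
  linarith




/-- For the fully convex lower-level problem min_y {f(x,y) : g(x,y) ≤ 0} with
KKT point (x̄,ȳ,u): every feasible (x,y) satisfies
f(x,y) ≥ f(x̄,ȳ) + ⟨∇_x f(x̄,ȳ) + Σᵢ uᵢ ∇_x gᵢ(x̄,ȳ), x − x̄⟩; in particular
∇_x ℓ(x̄,ȳ,u) is a subgradient of the optimal value function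
φ(x) := inf{f(x,y) : g(x,y) ≤ 0} at x̄. -/
theorem stmt_11 {n m q : ℕ}
    (f : EuclideanSpace ℝ (Fin n) → EuclideanSpace ℝ (Fin m) → ℝ)
    (g : Fin q → EuclideanSpace ℝ (Fin n) → EuclideanSpace ℝ (Fin m) → ℝ)
    (hfconv : ConvexOn ℝ Set.univ
      (fun p : EuclideanSpace ℝ (Fin n) × EuclideanSpace ℝ (Fin m) => f p.1 p.2))
    (hgconv : ∀ i, ConvexOn ℝ Set.univ
      (fun p : EuclideanSpace ℝ (Fin n) × EuclideanSpace ℝ (Fin m) => g i p.1 p.2))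
    (hfdiff : Differentiable ℝ
      (fun p : EuclideanSpace ℝ (Fin n) × EuclideanSpace ℝ (Fin m) => f p.1 p.2))
    (hgdiff : ∀ i, Differentiable ℝ
      (fun p : EuclideanSpace ℝ (Fin n) × EuclideanSpace ℝ (Fin m) => g i p.1 p.2))
    (xb : EuclideanSpace ℝ (Fin n)) (yb : EuclideanSpace ℝ (Fin m)) (u : Fin q → ℝ)
    (hfeas : ∀ i, g i xb yb ≤ 0) (hu : ∀ i, 0 ≤ u i)
    (hcomp : ∑ i, u i * g i xb yb = 0)
    (hstat : gradient (fun y => f xb y) yb +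
      ∑ i, u i • gradient (fun y => g i xb y) yb = 0)
    (φ : EuclideanSpace ℝ (Fin n) → EReal)
    (hφ : ∀ x, φ x = sInf {e : EReal |
      ∃ y : EuclideanSpace ℝ (Fin m), (∀ i, g i x y ≤ 0) ∧ e = ((f x y : ℝ) : EReal)}) :
    (∀ (x : EuclideanSpace ℝ (Fin n)) (y : EuclideanSpace ℝ (Fin m)),
      (∀ i, g i x y ≤ 0) →
        f xb yb + ⟪gradient (fun x' => f x' yb) xb +
            ∑ i, u i • gradient (fun x' => g i x' yb) xb, x - xb⟫ ≤ f x y) ∧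
    φ xb = ((f xb yb : ℝ) : EReal) ∧
    (∀ x : EuclideanSpace ℝ (Fin n),
      φ xb + ((⟪gradient (fun x' => f x' yb) xb +
          ∑ i, u i • gradient (fun x' => g i x' yb) xb, x - xb⟫ : ℝ) : EReal) ≤ φ x) := by
  set gf := gradient (fun x' => f x' yb) xb with hgf
  set gg : Fin q → EuclideanSpace ℝ (Fin n) := fun i => gradient (fun x' => g i x' yb) xb with hggdef
  set Gx : EuclideanSpace ℝ (Fin n) := gf + ∑ i, u i • gg i with hGx
  set L : EuclideanSpace ℝ (Fin n) × EuclideanSpace ℝ (Fin m) → ℝ :=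
    fun p => f p.1 p.2 + ∑ i, u i * g i p.1 p.2 with hL
  have hLconv : ConvexOn ℝ Set.univ L := by
    apply hfconv.add
    have : ∀ t : Finset (Fin q), ConvexOn ℝ Set.univ
        (fun p : EuclideanSpace ℝ (Fin n) × EuclideanSpace ℝ (Fin m) =>
          ∑ i ∈ t, u i * g i p.1 p.2) := by
      intro t
      induction t using Finset.cons_induction with
      | empty => simpa using convexOn_const (0:ℝ) convex_univ
      | cons i t hi ih =>
        simp only [Finset.sum_cons]
        exact ((hgconv i).smul (hu i)).add ih
    exact this Finset.univ
  have hLdiff : Differentiable ℝ L :=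
    hfdiff.add (Differentiable.fun_sum fun i _ => (hgdiff i).const_mul (u i))
  set D := fderiv ℝ L (xb, yb) with hD
  have hsecx : ∀ (F : EuclideanSpace ℝ (Fin n) → EuclideanSpace ℝ (Fin m) → ℝ),
      Differentiable ℝ (fun p : EuclideanSpace ℝ (Fin n) × EuclideanSpace ℝ (Fin m) =>
        F p.1 p.2) → DifferentiableAt ℝ (fun x' => F x' yb) xb := by
    intro F hF
    exact (hF (xb, yb)).comp (f := fun x' => (x', yb)) xb (differentiableAt_id.prodMk (differentiableAt_const yb))
  have hsecy : ∀ (F : EuclideanSpace ℝ (Fin n) → EuclideanSpace ℝ (Fin m) → ℝ),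
      Differentiable ℝ (fun p : EuclideanSpace ℝ (Fin n) × EuclideanSpace ℝ (Fin m) =>
        F p.1 p.2) → DifferentiableAt ℝ (fun y => F xb y) yb := by
    intro F hF
    exact (hF (xb, yb)).comp (f := fun y => (xb, y)) yb ((differentiableAt_const xb).prodMk differentiableAt_id)
  have claimA : ∀ v : EuclideanSpace ℝ (Fin n), D (v, 0) = ⟪Gx, v⟫ := by
    intro v
    have hι : HasFDerivAt (fun x' : EuclideanSpace ℝ (Fin n) => (x', yb))
        ((ContinuousLinearMap.id ℝ (EuclideanSpace ℝ (Fin n))).prod 0) xb :=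
      (hasFDerivAt_id xb).prodMk (hasFDerivAt_const yb xb)
    have hcomp1 : HasFDerivAt (fun x' => L (x', yb))
        (D.comp ((ContinuousLinearMap.id ℝ (EuclideanSpace ℝ (Fin n))).prod 0)) xb :=
      (hLdiff (xb, yb)).hasFDerivAt.comp (g := L) xb hι
    have hΦ : HasFDerivAt (fun x' => L (x', yb))
        ((InnerProductSpace.toDual ℝ (EuclideanSpace ℝ (Fin n))) gf +
          ∑ i, u i • (InnerProductSpace.toDual ℝ (EuclideanSpace ℝ (Fin n))) (gg i)) xb := by
      have h1 : HasFDerivAt (fun x' => f x' yb)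
          ((InnerProductSpace.toDual ℝ (EuclideanSpace ℝ (Fin n))) gf) xb :=
        (hsecx f hfdiff).hasGradientAt.hasFDerivAt
      have h2 : ∀ i : Fin q, HasFDerivAt (fun x' => u i * g i x' yb)
          (u i • (InnerProductSpace.toDual ℝ (EuclideanSpace ℝ (Fin n))) (gg i)) xb :=
        fun i => ((hsecx (g i) (hgdiff i)).hasGradientAt.hasFDerivAt).const_mul (u i)
      exact h1.add (HasFDerivAt.fun_sum fun i _ => h2 i)
    have huniq := hcomp1.unique hΦ
    have hv : D (v, (0 : EuclideanSpace ℝ (Fin m))) =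
        (D.comp ((ContinuousLinearMap.id ℝ (EuclideanSpace ℝ (Fin n))).prod 0)) v := by simp
    rw [hv, huniq]
    simp only [ContinuousLinearMap.add_apply, ContinuousLinearMap.sum_apply,
      ContinuousLinearMap.smul_apply, InnerProductSpace.toDual_apply_apply, smul_eq_mul]
    rw [hGx, inner_add_left, sum_inner]
    congr 1
    exact Finset.sum_congr rfl fun i _ => (real_inner_smul_left _ _ _).symm
  have claimB : ∀ w : EuclideanSpace ℝ (Fin m), D (0, w) = 0 := by
    intro w
    have hι : HasFDerivAt (fun y : EuclideanSpace ℝ (Fin m) => (xb, y))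
        ((0 : EuclideanSpace ℝ (Fin m) →L[ℝ] EuclideanSpace ℝ (Fin n)).prod
          (ContinuousLinearMap.id ℝ (EuclideanSpace ℝ (Fin m)))) yb :=
      (hasFDerivAt_const xb yb).prodMk (hasFDerivAt_id yb)
    have hcomp1 : HasFDerivAt (fun y => L (xb, y))
        (D.comp ((0 : EuclideanSpace ℝ (Fin m) →L[ℝ] EuclideanSpace ℝ (Fin n)).prod
          (ContinuousLinearMap.id ℝ (EuclideanSpace ℝ (Fin m))))) yb :=
      (hLdiff (xb, yb)).hasFDerivAt.comp (g := L) yb hι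
    have hΦ : HasFDerivAt (fun y => L (xb, y))
        ((InnerProductSpace.toDual ℝ (EuclideanSpace ℝ (Fin m)))
            (gradient (fun y => f xb y) yb) +
          ∑ i, u i • (InnerProductSpace.toDual ℝ (EuclideanSpace ℝ (Fin m)))
            (gradient (fun y => g i xb y) yb)) yb := by
      have h1 : HasFDerivAt (fun y => f xb y)
          ((InnerProductSpace.toDual ℝ (EuclideanSpace ℝ (Fin m)))
            (gradient (fun y => f xb y) yb)) yb :=
        (hsecy f hfdiff).hasGradientAt.hasFDerivAt
      have h2 : ∀ i : Fin q, HasFDerivAt (fun y => u i * g i xb y)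
          (u i • (InnerProductSpace.toDual ℝ (EuclideanSpace ℝ (Fin m)))
            (gradient (fun y => g i xb y) yb)) yb :=
        fun i => ((hsecy (g i) (hgdiff i)).hasGradientAt.hasFDerivAt).const_mul (u i)
      exact h1.add (HasFDerivAt.fun_sum fun i _ => h2 i)
    have huniq := hcomp1.unique hΦ
    have hw : D ((0 : EuclideanSpace ℝ (Fin n)), w) =
        (D.comp ((0 : EuclideanSpace ℝ (Fin m) →L[ℝ] EuclideanSpace ℝ (Fin n)).prod
          (ContinuousLinearMap.id ℝ (EuclideanSpace ℝ (Fin m))))) w := by simp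
    rw [hw, huniq]
    have hmerge : (InnerProductSpace.toDual ℝ (EuclideanSpace ℝ (Fin m)))
          (gradient (fun y => f xb y) yb) +
        ∑ i, u i • (InnerProductSpace.toDual ℝ (EuclideanSpace ℝ (Fin m)))
          (gradient (fun y => g i xb y) yb)
        = (InnerProductSpace.toDual ℝ (EuclideanSpace ℝ (Fin m)))
            (gradient (fun y => f xb y) yb +
              ∑ i, u i • gradient (fun y => g i xb y) yb) := by
      rw [map_add, map_sum]
      congr 1
      exact Finset.sum_congr rfl fun i _ => (map_smul _ _ _).symm
    rw [hmerge, hstat]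
    simp
  have main : ∀ (x : EuclideanSpace ℝ (Fin n)) (y : EuclideanSpace ℝ (Fin m)),
      (∀ i, g i x y ≤ 0) → f xb yb + ⟪Gx, x - xb⟫ ≤ f x y := by
    intro x y hxy
    have h1 := convex_fderiv_le hLconv hLdiff (xb, yb) (x, y)
    have hsub : ((x, y) : EuclideanSpace ℝ (Fin n) × EuclideanSpace ℝ (Fin m)) - (xb, yb) =
        (x - xb, (0 : EuclideanSpace ℝ (Fin m))) + ((0 : EuclideanSpace ℝ (Fin n)), y - yb) := by
      simp [Prod.ext_iff]
    rw [hsub, map_add] at h1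
    rw [claimA, claimB] at h1
    have hL1 : L (xb, yb) = f xb yb := by
      simp only [hL]
      rw [hcomp]; ring
    have hL2 : L (x, y) ≤ f x y := by
      have hle : ∑ i, u i * g i x y ≤ 0 :=
        Finset.sum_nonpos fun i _ => mul_nonpos_of_nonneg_of_nonpos (hu i) (hxy i)
      simp only [hL]
      linarith
    rw [hL1] at h1
    linarith
  have h2 : φ xb = ((f xb yb : ℝ) : EReal) := by
    rw [hφ]
    apply le_antisymm
    · exact sInf_le ⟨yb, hfeas, rfl⟩
    · apply le_sInf
      rintro e ⟨y, hy, rfl⟩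
      have hm := main xb y hy
      simp only [sub_self, inner_zero_right, add_zero] at hm
      exact_mod_cast hm
  refine ⟨main, h2, ?_⟩
  intro x
  rw [h2, hφ x, ← EReal.coe_add]
  apply le_sInf
  rintro e ⟨y, hy, rfl⟩
  exact_mod_cast main x y hy
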